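/- Let (E,ℰ) be a measurable space and let (P_μ)_{μ∈𝒫(E)} be a nonlinear Markov chain whose two-step kernel Q satisfies conditions (C1) and (C2). If π, ν ∈ 𝒫(E) are both invariant (π P_π = π and ν P_ν = ν), then π = ν. -/

import Mathlib

open MeasureTheory ProbabilityTheory

/-- Total variation distance `‖μ − ν‖_TV = 2 sup_{A ∈ ℰ} |μ(A) − ν(A)|`. -/
noncomputable def tvDist {E : Type*} [MeasurableSpace E] (μ ν : Measure E) : ℝ :=
  2 * ⨆ A : {s : Set E // MeasurableSet s}, |(μ A).toReal - (ν A).toReal|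

/-- One step of the nonlinear chain: `μ ↦ μ P_μ`, `(νP_μ)(B) = ∫ P_μ(x,B) ν(dx)`. -/
noncomputable def stepMeasure {E : Type*} [MeasurableSpace E]
    (P : Measure E → Kernel E E) (μ : Measure E) : Measure E :=
  μ.bind (fun x => P μ x)

/-- Two-step transition kernel `Q_μ(x,B) = ∫ P_μ(x,dy) P_{μP_μ}(y,B)`. -/
noncomputable def twoStepKernel {E : Type*} [MeasurableSpace E]
    (P : Measure E → Kernel E E) (μ : Measure E) (x : E) : Measure E :=
  (P μ x).bind (fun y => P (stepMeasure P μ) y)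

/-- Marginal distributions `μ_{n+1} = μ_n P_{μ_n}` of the nonlinear Markov chain. -/
noncomputable def marginal {E : Type*} [MeasurableSpace E]
    (P : Measure E → Kernel E E) (μ0 : Measure E) : ℕ → Measure E
  | 0 => μ0
  | n + 1 => stepMeasure P (marginal P μ0 n)

/-- toReal of a probability measure of a set is in `[0,1]`. -/
lemma probToRealMem {E : Type*} [MeasurableSpace E] (μ : Measure E)
    [IsProbabilityMeasure μ] (A : Set E) :
    0 ≤ (μ A).toReal ∧ (μ A).toReal ≤ 1 := by
  refine ⟨ENNReal.toReal_nonneg, ?_⟩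
  have h := ENNReal.toReal_mono (by simp) (prob_le_one (μ := μ) (s := A))
  simpa using h

/-- The TV-distance pointwise bound. -/
lemma abs_le_half_tvDist {E : Type*} [MeasurableSpace E] (μ ν : Measure E)
    [IsProbabilityMeasure μ] [IsProbabilityMeasure ν] {A : Set E}
    (hA : MeasurableSet A) :
    |(μ A).toReal - (ν A).toReal| ≤ tvDist μ ν / 2 := by
  have hb : BddAbove (Set.range fun B : {s : Set E // MeasurableSet s} =>
      |(μ B).toReal - (ν B).toReal|) := by
    refine ⟨1, ?_⟩
    rintro x ⟨B, rfl⟩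
    have h1 := probToRealMem μ B
    have h2 := probToRealMem ν B
    exact abs_le.mpr ⟨by linarith [h1.1, h2.2], by linarith [h1.2, h2.1]⟩
  have h := le_ciSup hb (⟨A, hA⟩ : {s : Set E // MeasurableSet s})
  unfold tvDist
  linarith

/-- Measurable, bounded-by-one functions are integrable for finite measures. -/
lemma integrableOfBdd {E : Type*} [MeasurableSpace E] (μ : Measure E)
    [IsFiniteMeasure μ] {f : E → ℝ} (hf : Measurable f) (hb : ∀ x, |f x| ≤ 1) :
    Integrable f μ := by
  refine (integrable_const (1 : ℝ)).mono' hf.aestronglyMeasurable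
    (Filter.Eventually.of_forall fun x => ?_)
  simpa using hb x

/-- under (C1) and (C2) for the two-step kernel, any two invariant
probability measures coincide. -/
theorem invariant_measure_unique
    {E : Type*} [MeasurableSpace E]
    (P : Measure E → Kernel E E) (hP : ∀ μ, IsMarkovKernel (P μ))
    (α₂ lam₂ : ℝ) (hα₂0 : 0 < α₂) (hα₂1 : α₂ < 1)
    (hlam₂0 : 0 ≤ lam₂) (hlam₂α : lam₂ ≤ α₂)
    (C1 : ∀ (μ ν : Measure E), IsProbabilityMeasure μ → IsProbabilityMeasure ν →
      ∀ x y : E, tvDist (twoStepKernel P μ x) (twoStepKernel P ν y) ≤ 2 * (1 - α₂))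
    (C2 : ∀ (μ ν : Measure E), IsProbabilityMeasure μ → IsProbabilityMeasure ν →
      ∀ x : E, tvDist (twoStepKernel P μ x) (twoStepKernel P ν x) ≤ lam₂ * tvDist μ ν)
    (π ν : Measure E) (hπ : IsProbabilityMeasure π) (hν : IsProbabilityMeasure ν)
    (hπinv : stepMeasure P π = π) (hνinv : stepMeasure P ν = ν) :
    π = ν := by
  classical
  -- E is nonempty
  have hEne : Nonempty E := by
    by_contra h
    rw [not_nonempty_iff] at h
    have h1 : π Set.univ = 1 := measure_univ
    rw [Set.univ_eq_empty_iff.mpr h, measure_empty] at h1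
    exact zero_ne_one h1
  -- the two-step kernel as an actual kernel
  have hQapp : ∀ (μ : Measure E) (x : E),
      twoStepKernel P μ x = ((P (stepMeasure P μ)) ∘ₖ (P μ)) x := by
    intro μ x
    rw [twoStepKernel, Kernel.comp_apply]
  have hQmk : ∀ μ : Measure E, IsMarkovKernel ((P (stepMeasure P μ)) ∘ₖ (P μ)) := by
    intro μ
    haveI := hP μ
    haveI := hP (stepMeasure P μ)
    infer_instance
  have hQprob : ∀ (μ : Measure E) (x : E),
      IsProbabilityMeasure (twoStepKernel P μ x) := by
    intro μ x
    rw [hQapp]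
    haveI := hQmk μ
    infer_instance
  -- invariance under the two-step kernel
  have hbindQ : ∀ (μ : Measure E), stepMeasure P μ = μ →
      μ.bind (fun x => twoStepKernel P μ x) = μ := by
    intro μ hμ
    have h1 : (fun x => twoStepKernel P μ x)
        = fun x => (P μ x).bind (fun y => P μ y) := by
      funext x
      rw [twoStepKernel, hμ]
    rw [h1, ← Measure.bind_bind (Kernel.measurable (P μ)).aemeasurable (Kernel.measurable (P μ)).aemeasurable]
    show (stepMeasure P μ).bind (fun y => P μ y) = μ
    rw [hμ]
    exact hμ
  have hπQ := hbindQ π hπinv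
  have hνQ := hbindQ ν hνinv
  -- Hahn decomposition of π - ν
  obtain ⟨S, hS, hS1, hS2⟩ := hahn_decomposition (μ := π) (ν := ν)
  set δ : ℝ := (π S).toReal - (ν S).toReal with hδdef
  have hνπS : ν S ≤ π S := hS1 S hS subset_rfl
  have hδ0 : 0 ≤ δ :=
    sub_nonneg.mpr (ENNReal.toReal_mono (measure_ne_top _ _) hνπS)
  have hδ1 : δ ≤ 1 := by
    have := (probToRealMem π S).2
    have := (probToRealMem ν S).1
    simp only [hδdef]; linarith
  -- compl values in reals
  have hπcompl : (π Sᶜ).toReal = 1 - (π S).toReal := by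
    rw [measure_compl hS (measure_ne_top _ _)]
    rw [measure_univ, ENNReal.toReal_sub_of_le prob_le_one (by simp)]
    simp
  have hνcompl : (ν Sᶜ).toReal = 1 - (ν S).toReal := by
    rw [measure_compl hS (measure_ne_top _ _)]
    rw [measure_univ, ENNReal.toReal_sub_of_le prob_le_one (by simp)]
    simp
  -- key pointwise set bounds
  have key1 : ∀ A : Set E, MeasurableSet A → (π A).toReal - (ν A).toReal ≤ δ := by
    intro A hA
    have e1 : (π A).toReal = (π (A ∩ S)).toReal + (π (A \ S)).toReal := by
      rw [← measure_inter_add_diff A hS,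
        ENNReal.toReal_add (measure_ne_top _ _) (measure_ne_top _ _)]
    have e2 : (ν A).toReal = (ν (A ∩ S)).toReal + (ν (A \ S)).toReal := by
      rw [← measure_inter_add_diff A hS,
        ENNReal.toReal_add (measure_ne_top _ _) (measure_ne_top _ _)]
    have e3 : (π S).toReal = (π (S ∩ A)).toReal + (π (S \ A)).toReal := by
      rw [← measure_inter_add_diff S hA,
        ENNReal.toReal_add (measure_ne_top _ _) (measure_ne_top _ _)]
    have e4 : (ν S).toReal = (ν (S ∩ A)).toReal + (ν (S \ A)).toReal := by
      rw [← measure_inter_add_diff S hA,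
        ENNReal.toReal_add (measure_ne_top _ _) (measure_ne_top _ _)]
    have hcomm : S ∩ A = A ∩ S := Set.inter_comm S A
    rw [hcomm] at e3 e4
    have h1 : (π (A \ S)).toReal ≤ (ν (A \ S)).toReal :=
      ENNReal.toReal_mono (measure_ne_top _ _)
        (hS2 _ (hA.diff hS) (fun x hx => hx.2))
    have h2 : (ν (S \ A)).toReal ≤ (π (S \ A)).toReal :=
      ENNReal.toReal_mono (measure_ne_top _ _)
        (hS1 _ (hS.diff hA) (fun x hx => hx.1))
    simp only [hδdef]
    linarith
  have key2 : ∀ A : Set E, MeasurableSet A → (ν A).toReal - (π A).toReal ≤ δ := by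
    intro A hA
    have e1 : (π A).toReal = (π (A ∩ S)).toReal + (π (A \ S)).toReal := by
      rw [← measure_inter_add_diff A hS,
        ENNReal.toReal_add (measure_ne_top _ _) (measure_ne_top _ _)]
    have e2 : (ν A).toReal = (ν (A ∩ S)).toReal + (ν (A \ S)).toReal := by
      rw [← measure_inter_add_diff A hS,
        ENNReal.toReal_add (measure_ne_top _ _) (measure_ne_top _ _)]
    have e3 : (π Sᶜ).toReal = (π (Sᶜ ∩ A)).toReal + (π (Sᶜ \ A)).toReal := by
      rw [← measure_inter_add_diff Sᶜ hA,
        ENNReal.toReal_add (measure_ne_top _ _) (measure_ne_top _ _)]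
    have e4 : (ν Sᶜ).toReal = (ν (Sᶜ ∩ A)).toReal + (ν (Sᶜ \ A)).toReal := by
      rw [← measure_inter_add_diff Sᶜ hA,
        ENNReal.toReal_add (measure_ne_top _ _) (measure_ne_top _ _)]
    have hcomm : Sᶜ ∩ A = A \ S := by
      ext x; simp [Set.mem_diff, and_comm]
    rw [hcomm] at e3 e4
    have h1 : (ν (A ∩ S)).toReal ≤ (π (A ∩ S)).toReal :=
      ENNReal.toReal_mono (measure_ne_top _ _)
        (hS1 _ (hA.inter hS) Set.inter_subset_right)
    have h2 : (π (Sᶜ \ A)).toReal ≤ (ν (Sᶜ \ A)).toReal :=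
      ENNReal.toReal_mono (measure_ne_top _ _)
        (hS2 _ (hS.compl.diff hA) (fun x hx => hx.1))
    simp only [hδdef]
    linarith
  -- tvDist π ν ≤ 2δ
  haveI : Nonempty {s : Set E // MeasurableSet s} := ⟨⟨∅, MeasurableSet.empty⟩⟩
  have hd2δ : tvDist π ν ≤ 2 * δ := by
    unfold tvDist
    have hsup : (⨆ A : {s : Set E // MeasurableSet s},
        |(π A).toReal - (ν A).toReal|) ≤ δ := by
      refine ciSup_le fun A => abs_le.mpr ⟨?_, key1 A A.2⟩
      linarith [key2 A A.2]
    linarith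
  -- the functions g and h
  set g : E → ℝ := fun x => (twoStepKernel P π x S).toReal with hgdef
  set f : E → ℝ := fun x => (twoStepKernel P ν x S).toReal with hfdef
  have hgmeas : Measurable g := by
    have h1 : Measurable fun x => ((P (stepMeasure P π)) ∘ₖ (P π)) x S := by
      haveI := hQmk π
      exact Kernel.measurable_coe _ hS
    have : g = fun x => (((P (stepMeasure P π)) ∘ₖ (P π)) x S).toReal := by
      funext x; rw [hgdef]; simp only [hQapp]
    rw [this]
    exact h1.ennreal_toReal
  have hfmeas : Measurable f := by
    have h1 : Measurable fun x => ((P (stepMeasure P ν)) ∘ₖ (P ν)) x S := by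
      haveI := hQmk ν
      exact Kernel.measurable_coe _ hS
    have : f = fun x => (((P (stepMeasure P ν)) ∘ₖ (P ν)) x S).toReal := by
      funext x; rw [hfdef]; simp only [hQapp]
    rw [this]
    exact h1.ennreal_toReal
  have hgbdd : ∀ x, |g x| ≤ 1 := by
    intro x
    haveI := hQprob π x
    have h := probToRealMem (twoStepKernel P π x) S
    rw [abs_le]; constructor <;> [linarith [h.1]; exact h.2]
  have hfbdd : ∀ x, |f x| ≤ 1 := by
    intro x
    haveI := hQprob ν x
    have h := probToRealMem (twoStepKernel P ν x) S
    rw [abs_le]; constructor <;> [linarith [h.1]; exact h.2]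
  -- C1 and C2 pointwise consequences
  have hC1 : ∀ x y : E, |g x - f y| ≤ 1 - α₂ := by
    intro x y
    haveI := hQprob π x
    haveI := hQprob ν y
    have h := abs_le_half_tvDist (twoStepKernel P π x) (twoStepKernel P ν y) hS
    have h2 := C1 π ν hπ hν x y
    simp only [hgdef, hfdef]
    linarith
  have hff : ∀ x y : E, |f x - f y| ≤ 1 - α₂ := by
    intro x y
    haveI := hQprob ν x
    haveI := hQprob ν y
    have h := abs_le_half_tvDist (twoStepKernel P ν x) (twoStepKernel P ν y) hS
    have h2 := C1 ν ν hν hν x y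
    simp only [hfdef]
    linarith
  have hC2 : ∀ x : E, g x - f x ≤ lam₂ * δ := by
    intro x
    haveI := hQprob π x
    haveI := hQprob ν x
    have h := abs_le_half_tvDist (twoStepKernel P π x) (twoStepKernel P ν x) hS
    have h2 := C2 π ν hπ hν x
    have h3 : lam₂ * tvDist π ν ≤ lam₂ * (2 * δ) :=
      mul_le_mul_of_nonneg_left hd2δ hlam₂0
    have h4 := (abs_le.mp h).2
    simp only [hgdef, hfdef] at h4 ⊢
    linarith
  -- the infimum of f
  set c : ℝ := ⨅ y, f y with hcdef
  have hbdd_below : BddBelow (Set.range f) := by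
    refine ⟨0, ?_⟩
    rintro r ⟨y, rfl⟩
    haveI := hQprob ν y
    exact (probToRealMem (twoStepKernel P ν y) S).1
  have hcle : ∀ y, c ≤ f y := fun y => ciInf_le hbdd_below y
  have hgle : ∀ x, g x ≤ c + (1 - α₂) := by
    intro x
    have h : g x - (1 - α₂) ≤ c :=
      le_ciInf fun y => by linarith [(abs_le.mp (hC1 x y)).2]
    linarith
  -- integral representations
  have hmeasπ : Measurable fun x => twoStepKernel P π x := by
    have h : (fun x => twoStepKernel P π x)
        = fun x => ((P (stepMeasure P π)) ∘ₖ (P π)) x := funext fun x => hQapp π x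
    rw [h]; exact Kernel.measurable _
  have hmeasν : Measurable fun x => twoStepKernel P ν x := by
    have h : (fun x => twoStepKernel P ν x)
        = fun x => ((P (stepMeasure P ν)) ∘ₖ (P ν)) x := funext fun x => hQapp ν x
    rw [h]; exact Kernel.measurable _
  have hmeasπS : Measurable fun x => twoStepKernel P π x S := by
    have h : (fun x => twoStepKernel P π x S)
        = fun x => ((P (stepMeasure P π)) ∘ₖ (P π)) x S := by
      funext x; rw [hQapp]
    rw [h]
    haveI := hQmk π
    exact Kernel.measurable_coe _ hS
  have hmeasνS : Measurable fun x => twoStepKernel P ν x S := by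
    have h : (fun x => twoStepKernel P ν x S)
        = fun x => ((P (stepMeasure P ν)) ∘ₖ (P ν)) x S := by
      funext x; rw [hQapp]
    rw [h]
    haveI := hQmk ν
    exact Kernel.measurable_coe _ hS
  have hπSint : (π S).toReal = ∫ x, g x ∂π := by
    have h1 : π S = ∫⁻ x, twoStepKernel P π x S ∂π := by
      conv_lhs => rw [← hπQ]
      rw [Measure.bind_apply hS hmeasπ.aemeasurable]
    have h2 := integral_toReal (μ := π) hmeasπS.aemeasurable
      (Filter.Eventually.of_forall fun x => by
        haveI := hQprob π x
        exact lt_of_le_of_lt prob_le_one ENNReal.one_lt_top)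
    rw [h1, ← h2]
  have hνSint : (ν S).toReal = ∫ x, f x ∂ν := by
    have h1 : ν S = ∫⁻ x, twoStepKernel P ν x S ∂ν := by
      conv_lhs => rw [← hνQ]
      rw [Measure.bind_apply hS hmeasν.aemeasurable]
    have h2 := integral_toReal (μ := ν) hmeasνS.aemeasurable
      (Filter.Eventually.of_forall fun x => by
        haveI := hQprob ν x
        exact lt_of_le_of_lt prob_le_one ENNReal.one_lt_top)
    rw [h1, ← h2]
  -- decomposition of π and ν using the Hahn set
  have hle1 : ν.restrict S ≤ π.restrict S := by
    rw [Measure.le_iff]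
    intro t ht
    rw [Measure.restrict_apply ht, Measure.restrict_apply ht]
    exact hS1 _ (ht.inter hS) Set.inter_subset_right
  have hle2 : π.restrict Sᶜ ≤ ν.restrict Sᶜ := by
    rw [Measure.le_iff]
    intro t ht
    rw [Measure.restrict_apply ht, Measure.restrict_apply ht]
    exact hS2 _ (ht.inter hS.compl) Set.inter_subset_right
  set Δp : Measure E := π.restrict S - ν.restrict S with hΔpdef
  set Δm : Measure E := ν.restrict Sᶜ - π.restrict Sᶜ with hΔmdef
  have eπ : π = Δp + ν.restrict S + π.restrict Sᶜ := by
    rw [hΔpdef, Measure.sub_add_cancel_of_le hle1,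
      Measure.restrict_add_restrict_compl hS]
  have eν : ν = Δm + π.restrict Sᶜ + ν.restrict S := by
    rw [hΔmdef, Measure.sub_add_cancel_of_le hle2, add_comm,
      Measure.restrict_add_restrict_compl hS]
  -- masses of the pieces
  have hmassp : (Δp Set.univ).toReal = δ := by
    rw [hΔpdef, Measure.sub_apply MeasurableSet.univ hle1,
      Measure.restrict_apply_univ, Measure.restrict_apply_univ,
      ENNReal.toReal_sub_of_le hνπS (measure_ne_top _ _)]
  have hmassm : (Δm Set.univ).toReal = δ := by
    have hle : π Sᶜ ≤ ν Sᶜ := hS2 Sᶜ hS.compl subset_rfl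
    rw [hΔmdef, Measure.sub_apply MeasurableSet.univ hle2,
      Measure.restrict_apply_univ, Measure.restrict_apply_univ,
      ENNReal.toReal_sub_of_le hle (measure_ne_top _ _), hνcompl, hπcompl]
    simp only [hδdef]
    ring
  -- integrability
  haveI : IsFiniteMeasure Δp := isFiniteMeasure_of_le (π.restrict S) Measure.sub_le
  haveI : IsFiniteMeasure Δm := isFiniteMeasure_of_le (ν.restrict Sᶜ) Measure.sub_le
  have hgint : ∀ (μ' : Measure E) [IsFiniteMeasure μ'], Integrable g μ' :=
    fun μ' _ => integrableOfBdd μ' hgmeas hgbdd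
  have hfint : ∀ (μ' : Measure E) [IsFiniteMeasure μ'], Integrable f μ' :=
    fun μ' _ => integrableOfBdd μ' hfmeas hfbdd
  -- split the integrals
  have iπ : ∫ x, g x ∂π
      = ∫ x, g x ∂Δp + ∫ x, g x ∂(ν.restrict S) + ∫ x, g x ∂(π.restrict Sᶜ) := by
    conv_lhs => rw [eπ]
    rw [integral_add_measure ((hgint Δp).add_measure (hgint _)) (hgint _),
      integral_add_measure (hgint Δp) (hgint _)]
  have iν : ∫ x, f x ∂ν
      = ∫ x, f x ∂Δm + ∫ x, f x ∂(π.restrict Sᶜ) + ∫ x, f x ∂(ν.restrict S) := by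
    conv_lhs => rw [eν]
    rw [integral_add_measure ((hfint Δm).add_measure (hfint _)) (hfint _),
      integral_add_measure (hfint Δm) (hfint _)]
  -- bounds on the pieces
  have B1 : ∫ x, g x ∂Δp ≤ (c + (1 - α₂)) * δ := by
    calc ∫ x, g x ∂Δp ≤ ∫ _x, (c + (1 - α₂)) ∂Δp :=
          integral_mono (hgint Δp) (integrable_const _) hgle
      _ = (Δp Set.univ).toReal * (c + (1 - α₂)) := by
          rw [integral_const, smul_eq_mul, measureReal_def]
      _ = (c + (1 - α₂)) * δ := by rw [hmassp]; ring
  have B2 : c * δ ≤ ∫ x, f x ∂Δm := by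
    calc c * δ = (Δm Set.univ).toReal * c := by rw [hmassm]; ring
      _ = ∫ _x, c ∂Δm := by rw [integral_const, smul_eq_mul, measureReal_def]
      _ ≤ ∫ x, f x ∂Δm := integral_mono (integrable_const _) (hfint Δm) hcle
  have B3 : ∫ x, (g x - f x) ∂(ν.restrict S) ≤ lam₂ * δ * (ν S).toReal := by
    calc ∫ x, (g x - f x) ∂(ν.restrict S) ≤ ∫ _x, lam₂ * δ ∂(ν.restrict S) :=
          integral_mono ((hgint _).sub (hfint _)) (integrable_const _) hC2
      _ = ((ν.restrict S) Set.univ).toReal * (lam₂ * δ) := by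
          rw [integral_const, smul_eq_mul, measureReal_def]
      _ = lam₂ * δ * (ν S).toReal := by rw [Measure.restrict_apply_univ]; ring
  have B4 : ∫ x, (g x - f x) ∂(π.restrict Sᶜ) ≤ lam₂ * δ * (π Sᶜ).toReal := by
    calc ∫ x, (g x - f x) ∂(π.restrict Sᶜ) ≤ ∫ _x, lam₂ * δ ∂(π.restrict Sᶜ) :=
          integral_mono ((hgint _).sub (hfint _)) (integrable_const _) hC2
      _ = ((π.restrict Sᶜ) Set.univ).toReal * (lam₂ * δ) := by
          rw [integral_const, smul_eq_mul, measureReal_def]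
      _ = lam₂ * δ * (π Sᶜ).toReal := by rw [Measure.restrict_apply_univ]; ring
  have hsub1 : ∫ x, (g x - f x) ∂(ν.restrict S)
      = ∫ x, g x ∂(ν.restrict S) - ∫ x, f x ∂(ν.restrict S) :=
    integral_sub (hgint _) (hfint _)
  have hsub2 : ∫ x, (g x - f x) ∂(π.restrict Sᶜ)
      = ∫ x, g x ∂(π.restrict Sᶜ) - ∫ x, f x ∂(π.restrict Sᶜ) :=
    integral_sub (hgint _) (hfint _)
  -- the main inequality
  have hδeq : δ = ∫ x, g x ∂π - ∫ x, f x ∂ν := by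
    rw [hδdef, hπSint, hνSint]
  have hmass : (ν S).toReal + (π Sᶜ).toReal = 1 - δ := by
    rw [hπcompl]; simp only [hδdef]; ring
  have main : δ ≤ (1 - α₂) * δ + lam₂ * δ * (1 - δ) := by
    have h1 : δ ≤ (c + (1 - α₂)) * δ - c * δ
        + lam₂ * δ * (ν S).toReal + lam₂ * δ * (π Sᶜ).toReal := by
      linarith [hδeq, iπ, iν, B1, B2, B3, B4, hsub1, hsub2]
    have h2 : lam₂ * δ * (ν S).toReal + lam₂ * δ * (π Sᶜ).toReal
        = lam₂ * δ * (1 - δ) := by rw [← mul_add, hmass]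
    have h3 : (c + (1 - α₂)) * δ - c * δ = (1 - α₂) * δ := by ring
    linarith
  -- conclude δ = 0
  have hδzero : δ = 0 := by
    by_contra hne
    have hpos : 0 < δ := lt_of_le_of_ne hδ0 (Ne.symm hne)
    nlinarith [mul_le_mul_of_nonneg_right hlam₂α
        (mul_nonneg hpos.le (sub_nonneg.mpr hδ1)),
      mul_pos hα₂0 (mul_pos hpos hpos)]
  -- and π = ν
  refine Measure.ext fun A hA => ?_
  have k1 := key1 A hA
  have k2 := key2 A hA
  rw [hδzero] at k1 k2
  have hAR : (π A).toReal = (ν A).toReal := by linarith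
  exact (ENNReal.toReal_eq_toReal_iff' (measure_ne_top _ _) (measure_ne_top _ _)).mp hAR
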